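/- Let (K,d) be a nonempty finite metric space and ν a probability measure on K such that E_d(ν) consists of a single point c. Let (T_n)_{n≥1} be a sequence of independent, identically distributed K-valued random variables with law ν, and for each n let g_n(y) = (1/n) Σ_{i=1}^n d(T_i,y) and let y_n be any element of argmin_{y∈K} g_n(y). Then d(y_n, c) → 0 almost surely as n → ∞; equivalently, almost surely argmin_{y∈K} g_n = {c} for all sufficiently large n. -/

import Mathlib

open MeasureTheory Filter ProbabilityTheory

section aux

variable {K : Type*} [Fintype K] [Nonempty K] [MetricSpace K]
    [MeasurableSpace K] [BorelSpace K]

lemma aux_bdd : ∃ C : ℝ, ∀ a b : K, dist a b ≤ C := by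
  obtain ⟨C, hC⟩ := (Set.finite_range (fun p : K × K => dist p.1 p.2)).bddAbove
  exact ⟨C, fun a b => hC ⟨(a, b), rfl⟩⟩

end aux

theorem lln_finite_metric_space {K : Type*} [Fintype K] [Nonempty K] [MetricSpace K]
    [MeasurableSpace K] [BorelSpace K]
    (ν : Measure K) [IsProbabilityMeasure ν] (c : K)
    (hc : {y : K | ∀ y' : K, (∫ x, dist y x ∂ν) ≤ ∫ x, dist y' x ∂ν} = {c})
    {Ω : Type*} [MeasurableSpace Ω] (P : Measure Ω) [IsProbabilityMeasure P]
    (T : ℕ → Ω → K) (hTmeas : ∀ i, Measurable (T i))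
    (hTindep : ProbabilityTheory.iIndepFun T P)
    (hTlaw : ∀ i, P.map (T i) = ν)
    (yn : ℕ → Ω → K)
    (hyn : ∀ (n : ℕ) (ω : Ω), ∀ y : K,
      (1 / (n : ℝ)) * ∑ i ∈ Finset.range n, dist (T i ω) (yn n ω) ≤
      (1 / (n : ℝ)) * ∑ i ∈ Finset.range n, dist (T i ω) y) :
    ∀ᵐ ω ∂P, Filter.Tendsto (fun n => dist (yn n ω) c) Filter.atTop (nhds 0) := by
  classical
  obtain ⟨C, hC⟩ := aux_bdd (K := K)
  set g : K → ℝ := fun y => ∫ x, dist y x ∂ν with hg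
  -- c is the unique minimizer of g
  have hcmin : ∀ y : K, g c ≤ g y := by
    have : c ∈ {y : K | ∀ y' : K, (∫ x, dist y x ∂ν) ≤ ∫ x, dist y' x ∂ν} := by
      rw [hc]; rfl
    exact this
  have huniq : ∀ y : K, y ≠ c → g c < g y := by
    intro y hy
    by_contra h
    push_neg at h
    have hmin : y ∈ {y : K | ∀ y' : K, (∫ x, dist y x ∂ν) ≤ ∫ x, dist y' x ∂ν} := by
      intro y'
      exact le_trans h (hcmin y')
    rw [hc] at hmin
    exact hy hmin
  -- strong law for each y
  have hslln : ∀ y : K, ∀ᵐ ω ∂P,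
      Tendsto (fun n : ℕ => (∑ i ∈ Finset.range n, dist (T i ω) y) / n) atTop (nhds (g y)) := by
    intro y
    have hmeas : ∀ i, Measurable (fun ω => dist (T i ω) y) :=
      fun i => (measurable_dist.comp ((hTmeas i).prodMk measurable_const))
    have hint : Integrable (fun ω => dist (T 0 ω) y) P := by
      refine ⟨(hmeas 0).aestronglyMeasurable, ?_⟩
      apply HasFiniteIntegral.of_bounded (C := C)
      filter_upwards with ω
      rw [Real.norm_of_nonneg dist_nonneg]
      exact hC _ _
    have hident : ∀ i, ProbabilityTheory.IdentDistrib (fun ω => dist (T i ω) y)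
        (fun ω => dist (T 0 ω) y) P P := by
      intro i
      have hTid : ProbabilityTheory.IdentDistrib (T i) (T 0) P P :=
        ⟨(hTmeas i).aemeasurable, (hTmeas 0).aemeasurable, by rw [hTlaw i, hTlaw 0]⟩
      exact hTid.comp (measurable_dist.comp (measurable_id.prodMk measurable_const))
    have hindep : Pairwise (Function.onFun (ProbabilityTheory.IndepFun · · P)
        fun i ω => dist (T i ω) y) := by
      intro i j hij
      exact (hTindep.indepFun hij).comp
        (measurable_dist.comp (measurable_id.prodMk measurable_const))
        (measurable_dist.comp (measurable_id.prodMk measurable_const))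
    have := ProbabilityTheory.strong_law_ae_real (μ := P)
      (fun i ω => dist (T i ω) y) hint hindep hident
    have hEeq : (∫ ω, dist (T 0 ω) y ∂P) = g y := by
      have h1 : g y = ∫ x, dist x y ∂ν := by
        simp only [hg]; simp_rw [dist_comm]
      rw [h1, ← hTlaw 0, integral_map (hTmeas 0).aemeasurable]
      exact (measurable_dist.comp (measurable_id.prodMk measurable_const)).aestronglyMeasurable
    rw [hEeq] at this
    exact this
  have hall : ∀ᵐ ω ∂P, ∀ y : K,
      Tendsto (fun n : ℕ => (∑ i ∈ Finset.range n, dist (T i ω) y) / n) atTop (nhds (g y)) :=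
    ae_all_iff.2 hslln
  filter_upwards [hall] with ω hω
  -- trivial case: K = {c}
  by_cases hK : ∀ y : K, y = c
  · have : ∀ n, dist (yn n ω) c = 0 := by
      intro n; rw [hK (yn n ω)]; simp
    simp_rw [this]
    exact tendsto_const_nhds
  push_neg at hK
  obtain ⟨y0, hy0⟩ := hK
  set S : Finset K := Finset.univ.filter (· ≠ c) with hS
  have hSne : S.Nonempty := ⟨y0, by simp [hS, hy0]⟩
  set δ : ℝ := S.inf' hSne (fun y => g y - g c) with hδ
  have hδpos : 0 < δ := by
    rw [hδ]
    apply (Finset.lt_inf'_iff _).2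
    intro y hy
    have : y ≠ c := by simpa [hS] using hy
    linarith [huniq y this]
  -- eventually all empirical means are δ/2-close
  have hev : ∀ᶠ n : ℕ in atTop, ∀ y : K,
      |(∑ i ∈ Finset.range n, dist (T i ω) y) / n - g y| < δ / 2 := by
    rw [eventually_all]
    intro y
    obtain ⟨N, hN⟩ := Metric.tendsto_atTop.1 (hω y) (δ / 2) (by positivity)
    filter_upwards [eventually_ge_atTop N] with n hn
    have := hN n hn
    rwa [Real.dist_eq] at this
  have hev0 : ∀ᶠ n : ℕ in atTop, dist (yn n ω) c = 0 := by
    filter_upwards [hev] with n hn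
    set f : K → ℝ := fun y => (∑ i ∈ Finset.range n, dist (T i ω) y) / n with hf
    have hfmin : f (yn n ω) ≤ f c := by
      have h := hyn n ω c
      simp only [one_div] at h
      simp only [hf, div_eq_mul_inv]
      calc (∑ i ∈ Finset.range n, dist (T i ω) (yn n ω)) * (n:ℝ)⁻¹
          = (n:ℝ)⁻¹ * ∑ i ∈ Finset.range n, dist (T i ω) (yn n ω) := by ring
        _ ≤ (n:ℝ)⁻¹ * ∑ i ∈ Finset.range n, dist (T i ω) c := h
        _ = (∑ i ∈ Finset.range n, dist (T i ω) c) * (n:ℝ)⁻¹ := by ring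
    by_contra hne
    have hyne : yn n ω ≠ c := fun h => hne (by rw [h]; simp)
    have hδle : δ ≤ g (yn n ω) - g c := by
      rw [hδ]
      exact Finset.inf'_le _ (by simp [hS, hyne])
    have h1 : |f (yn n ω) - g (yn n ω)| < δ / 2 := hn _
    have h2 : |f c - g c| < δ / 2 := hn c
    rw [abs_lt] at h1 h2
    linarith
  have : (fun n => dist (yn n ω) c) =ᶠ[atTop] (fun _ => (0:ℝ)) := hev0
  exact Tendsto.congr' this.symm tendsto_const_nhds
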